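/- For every permutation π, the forward-march sorting distance satisfies ⌈b′(π)/3⌉ ≤ d′(π) ≤ b′(π); i.e., π can be transformed into the identity permutation by at most b′(π) forward-march operations, and every such sorting sequence has length at least ⌈b′(π)/3⌉. (This shows that the algorithm SortByRTwFM3 is a 3-approximation.) -/

import Mathlib

/-- A permutation on `n` elements: a list `[π₀, π₁, …, π_{n+1}]` of distinct
naturals that is a rearrangement of `0, 1, …, n+1` with `π₀ = 0` and
`π_{n+1} = n+1`. -/
def IsPerm (n : ℕ) (π : List ℕ) : Prop :=
  π.Perm (List.range (n + 2)) ∧ π.getD 0 0 = 0 ∧ π.getD (n + 1) 0 = n + 1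

/-- Breakpoint count `b(π)`: `1` plus the number of indices `i` with
`2 ≤ i ≤ n+1` and `|π_i − π_{i−1}| ≠ 1` (these are exactly the consecutive
pairs of the tail `π₁, …, π_{n+1}`). -/
def bp (π : List ℕ) : ℕ :=
  1 + ((π.drop 1).zip (π.drop 2)).countP
        (fun p => !(p.1 + 1 == p.2 || p.2 + 1 == p.1))

/-- Redefined breakpoint count `b′(π)`: the number of indices `i` with
`1 ≤ i ≤ n+1` and `|π_i − π_{i−1}| ≠ 1`. -/
def bp' (π : List ℕ) : ℕ :=
  (π.zip (π.drop 1)).countP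
    (fun p => !(p.1 + 1 == p.2 || p.2 + 1 == p.1))

/-- Prefix reversal `β(1,j)`: `[π₀, π_{j−1}, …, π₁, π_j, …, π_{n+1}]`. -/
def prefixReversal (π : List ℕ) (j : ℕ) : List ℕ :=
  π.take 1 ++ ((π.drop 1).take (j - 1)).reverse ++ π.drop j

/-- Prefix transposition `τ(1,j,k)`:
`[π₀, π_j, …, π_{k−1}, π₁, …, π_{j−1}, π_k, …, π_{n+1}]`. -/
def prefixTransposition (π : List ℕ) (j k : ℕ) : List ℕ :=
  π.take 1 ++ (π.drop j).take (k - j) ++ (π.drop 1).take (j - 1) ++ π.drop k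

/-- Prefix transreversal `βτ(1,j,k)`:
`[π₀, π_j, …, π_{k−1}, π_{j−1}, …, π₁, π_k, …, π_{n+1}]`. -/
def prefixTransreversal (π : List ℕ) (j k : ℕ) : List ℕ :=
  π.take 1 ++ (π.drop j).take (k - j) ++ ((π.drop 1).take (j - 1)).reverse ++ π.drop k

/-- A prefix operation: a prefix reversal, a prefix transposition, or a
prefix transreversal. -/
inductive PrefOp
  | rev (j : ℕ)
  | trans (j k : ℕ)
  | transrev (j k : ℕ)

/-- Apply a prefix operation to a permutation. -/
def PrefOp.apply (π : List ℕ) : PrefOp → List ℕ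
  | .rev j => prefixReversal π j
  | .trans j k => prefixTransposition π j k
  | .transrev j k => prefixTransreversal π j k

/-- Validity of a prefix operation on a permutation of `n` elements:
`3 ≤ j ≤ n+1` for a prefix reversal, `2 ≤ j < k ≤ n+1` for a prefix
transposition or a prefix transreversal. -/
def PrefOp.Valid (n : ℕ) : PrefOp → Prop
  | .rev j => 3 ≤ j ∧ j ≤ n + 1
  | .trans j k => 2 ≤ j ∧ j < k ∧ k ≤ n + 1
  | .transrev j k => 2 ≤ j ∧ j < k ∧ k ≤ n + 1

/-- Is the operation a prefix reversal? -/
def PrefOp.isRev : PrefOp → Bool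
  | .rev _ => true
  | _ => false

/-- Is the operation a prefix transreversal? -/
def PrefOp.isTransrev : PrefOp → Bool
  | .transrev _ _ => true
  | _ => false

/-- Apply a sequence of prefix operations, left to right. -/
def applySeq : List ℕ → List PrefOp → List ℕ
  | π, [] => π
  | π, o :: os => applySeq (o.apply π) os

/-- All operations in the sequence are valid for permutations of `n` elements. -/
def ValidSeq (n : ℕ) (ops : List PrefOp) : Prop :=
  ∀ o ∈ ops, o.Valid n

/-- `fm π` is `m(π) + 1`, where `m(π)` is the largest index `m` such that
`π_i = i` for all `0 ≤ i ≤ m`; i.e. the length of the longest already-sorted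
prefix of `π`. -/
def fm (π : List ℕ) : ℕ :=
  ((List.range π.length).takeWhile (fun i => π.getD i 0 == i)).length

/-- Forward-march prefix reversal: reverses the segment
`π_{m(π)+1}, …, π_{j−1}` in place. -/
def fmPrefixReversal (π : List ℕ) (j : ℕ) : List ℕ :=
  π.take (fm π) ++ ((π.drop (fm π)).take (j - fm π)).reverse ++ π.drop j

/-- Forward-march prefix transposition: cuts the segment
`π_{m(π)+1}, …, π_{j−1}` and pastes it between `π_{k−1}` and `π_k`. -/
def fmPrefixTransposition (π : List ℕ) (j k : ℕ) : List ℕ :=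
  π.take (fm π) ++ (π.drop j).take (k - j) ++
    (π.drop (fm π)).take (j - fm π) ++ π.drop k

/-- A forward-march operation: an FM prefix reversal or an FM prefix
transposition. -/
inductive FMOp
  | rev (j : ℕ)
  | trans (j k : ℕ)

/-- Apply a forward-march operation. -/
def FMOp.apply (π : List ℕ) : FMOp → List ℕ
  | .rev j => fmPrefixReversal π j
  | .trans j k => fmPrefixTransposition π j k

/-- Validity of a forward-march operation on a permutation `π` of `n`
elements: `m(π)+3 ≤ j ≤ n+1` for an FM prefix reversal, and
`m(π)+2 ≤ j ≤ n`, `j < k ≤ n+1` for an FM prefix transposition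
(recall `fm π = m(π) + 1`). -/
def FMOp.Valid (n : ℕ) (π : List ℕ) : FMOp → Prop
  | .rev j => fm π + 2 ≤ j ∧ j ≤ n + 1
  | .trans j k => fm π + 1 ≤ j ∧ j ≤ n ∧ j < k ∧ k ≤ n + 1

/-- Is the forward-march operation an FM prefix reversal? -/
def FMOp.isRev : FMOp → Bool
  | .rev _ => true
  | _ => false

/-- Apply a sequence of forward-march operations, left to right. -/
def applyFMSeq : List ℕ → List FMOp → List ℕ
  | π, [] => π
  | π, o :: os => applyFMSeq (o.apply π) os

/-- Validity of a sequence of forward-march operations, where each operation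
must be valid for the permutation obtained after applying the previous ones. -/
def FMValidSeq (n : ℕ) : List ℕ → List FMOp → Prop
  | _, [] => True
  | π, o :: os => o.Valid n π ∧ FMValidSeq n (o.apply π) os


section Helpers

/-- breakpoint indicator for a single adjacent pair -/
def bpc (a b : ℕ) : ℕ := if (!(a + 1 == b || b + 1 == a)) = true then 1 else 0

lemma bpc_le_one (a b : ℕ) : bpc a b ≤ 1 := by
  simp only [bpc]; split <;> omega

lemma bpc_comm (a b : ℕ) : bpc a b = bpc b a := by
  simp [bpc, Bool.or_comm]

lemma bpc_eq_zero (a : ℕ) : bpc a (a + 1) = 0 := by simp [bpc]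

lemma bpc_eq_one {a b : ℕ} (h1 : a + 1 ≠ b) (h2 : b + 1 ≠ a) : bpc a b = 1 := by
  simp [bpc, h1, h2]

lemma bp'_nil : bp' [] = 0 := rfl

lemma bp'_single (a : ℕ) : bp' [a] = 0 := rfl

lemma bp'_cons_cons (a b : ℕ) (l : List ℕ) :
    bp' (a :: b :: l) = bpc a b + bp' (b :: l) := by
  simp only [bp', bpc, List.drop_one, List.tail_cons, List.zip_cons_cons, List.countP_cons]
  cases h : (!(a + 1 == b || b + 1 == a)) <;> simp [h] <;> omega

lemma bp'_cons (a : ℕ) (l : List ℕ) (h : l ≠ []) :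
    bp' (a :: l) = bpc a (l.headD 0) + bp' l := by
  cases l with
  | nil => simp at h
  | cons b t => simp [bp'_cons_cons]

lemma bp'_append_cons (b : ℕ) (B : List ℕ) :
    ∀ (a : ℕ) (A : List ℕ), bp' (a :: A ++ b :: B) = bp' (a :: A ++ [b]) + bp' (b :: B) := by
  intro a A
  induction A generalizing a with
  | nil => simp [bp'_cons_cons, bp'_single]
  | cons a' A' ih =>
      simp only [List.cons_append] at *
      rw [bp'_cons_cons, ih a', bp'_cons_cons]
      omega

lemma bp'_concat (a : ℕ) : ∀ (l : List ℕ) (_ : l ≠ []),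
    bp' (l ++ [a]) = bp' l + bpc (l.getLastD 0) a := by
  intro l
  induction l with
  | nil => simp
  | cons b t ih =>
      intro _
      cases t with
      | nil => simp [bp'_cons_cons, bp'_single, bp'_nil]
      | cons c t' =>
          simp only [List.cons_append] at ih ⊢
          rw [bp'_cons_cons, ih (by simp), bp'_cons_cons]
          simp [List.getLastD]
          omega

lemma bp'_append (A B : List ℕ) (hA : A ≠ []) (hB : B ≠ []) :
    bp' (A ++ B) = bp' A + bp' B + bpc (A.getLastD 0) (B.headD 0) := by
  cases A with
  | nil => simp at hA
  | cons a A' =>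
    cases B with
    | nil => simp at hB
    | cons b B' =>
        rw [bp'_append_cons, bp'_concat _ _ (by simp)]
        simp
        omega

lemma bp'_reverse : ∀ (l : List ℕ), bp' l.reverse = bp' l := by
  intro l
  induction l with
  | nil => rfl
  | cons a t ih =>
      cases t with
      | nil => rfl
      | cons b t' =>
          rw [List.reverse_cons, bp'_concat _ _ (by simp), ih, bp'_cons_cons]
          rw [List.getLastD_eq_getLast?, List.getLast?_reverse]
          simp [bpc_comm]
          omega

lemma bp'_append_le (A B : List ℕ) : bp' (A ++ B) ≤ bp' A + bp' B + 1 := by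
  rcases eq_or_ne A [] with rfl | hA
  · simp [bp'_nil]
  rcases eq_or_ne B [] with rfl | hB
  · simp [bp'_nil]
  rw [bp'_append A B hA hB]
  have := bpc_le_one (A.getLastD 0) (B.headD 0)
  omega

lemma bp'_append_ge (A B : List ℕ) : bp' A + bp' B ≤ bp' (A ++ B) := by
  rcases eq_or_ne A [] with rfl | hA
  · simp [bp'_nil]
  rcases eq_or_ne B [] with rfl | hB
  · simp [bp'_nil]
  rw [bp'_append A B hA hB]
  omega

lemma bp'_range' : ∀ (m s : ℕ), bp' (List.range' s m) = 0 := by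
  intro m
  induction m with
  | zero => intro s; rfl
  | succ m ih =>
      intro s
      cases m with
      | zero => rfl
      | succ m' =>
          rw [List.range'_succ, List.range'_succ, bp'_cons_cons]
          rw [← List.range'_succ, bpc_eq_zero, ih]

lemma bp'_range (m : ℕ) : bp' (List.range m) = 0 := by
  rw [List.range_eq_range']; exact bp'_range' m 0

lemma headD_eq_getD (l : List ℕ) : l.headD 0 = l.getD 0 0 := by cases l <;> simp

lemma getLastD_eq_getD (l : List ℕ) (h : l ≠ []) :
    l.getLastD 0 = l.getD (l.length - 1) 0 := by
  rw [List.getLastD_eq_getLast?, List.getLast?_eq_getElem?]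
  simp [List.getD_eq_getElem?_getD]

lemma getD_take (l : List ℕ) {m i : ℕ} (h : i < m) : (l.take m).getD i 0 = l.getD i 0 := by
  simp [List.getD_eq_getElem?_getD, List.getElem?_take, h]

lemma getD_drop (l : List ℕ) (m i : ℕ) : (l.drop m).getD i 0 = l.getD (m + i) 0 := by
  simp [List.getD_eq_getElem?_getD, List.getElem?_drop]

lemma takeWhile_length_lt {p : ℕ → Bool} (d : ℕ) :
    ∀ (l : List ℕ), (l.takeWhile p).length < l.length →
    ¬ p (l.getD (l.takeWhile p).length d) = true := by
  intro l
  induction l with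
  | nil => simp
  | cons a t ih =>
      by_cases hp : p a = true
      · rw [List.takeWhile_cons_of_pos hp]
        simpa using ih
      · rw [List.takeWhile_cons_of_neg hp]
        simpa using hp

lemma fm_le (π : List ℕ) : fm π ≤ π.length := by
  have := (List.takeWhile_prefix (l := List.range π.length)
    (fun i => π.getD i 0 == i)).length_le
  simpa [fm] using this

lemma fm_getD (π : List ℕ) (i : ℕ) (h : i < fm π) : π.getD i 0 = i := by
  have hlt : i < ((List.range π.length).takeWhile (fun i => π.getD i 0 == i)).length := h
  have hpre := List.takeWhile_prefix (l := List.range π.length) (fun i => π.getD i 0 == i)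
  have hi2 : i < (List.range π.length).length := lt_of_lt_of_le h (by simpa [fm] using fm_le π)
  have hmem : ((List.range π.length).takeWhile (fun i => π.getD i 0 == i))[i] ∈
      ((List.range π.length).takeWhile (fun i => π.getD i 0 == i)) :=
    List.getElem_mem hlt
  have hp := List.mem_takeWhile_imp hmem
  rw [hpre.getElem hlt, List.getElem_range] at hp
  simpa using hp

lemma fm_lt_ne (π : List ℕ) (h : fm π < π.length) : π.getD (fm π) 0 ≠ fm π := by
  have h2 : ((List.range π.length).takeWhile (fun i => π.getD i 0 == i)).length <
      (List.range π.length).length := by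
    rw [List.length_range]; exact h
  have h3 := takeWhile_length_lt 0 (List.range π.length) h2
  have hL : (List.range π.length).getD
      ((List.range π.length).takeWhile (fun i => π.getD i 0 == i)).length 0 =
      ((List.range π.length).takeWhile (fun i => π.getD i 0 == i)).length := by
    rw [List.getD_eq_getElem _ _ h2, List.getElem_range]
  rw [hL] at h3
  intro hc
  apply h3
  simpa [fm] using hc

end Helpers

section LowerBound

lemma bp'_op_le (n : ℕ) (π : List ℕ) (o : FMOp) (hv : o.Valid n π) :
    bp' π ≤ bp' (o.apply π) + 3 := by
  cases o with
  | rev j =>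
      obtain ⟨hj1, hj2⟩ := hv
      set f := fm π with hf
      set A := π.take f with hA
      set B := (π.drop f).take (j - f) with hB
      set C := π.drop j with hC
      have hsplit : π = A ++ (B ++ C) := by
        rw [hB, hC]
        have : (π.drop f).take (j - f) ++ (π.drop f).drop (j - f) = π.drop f :=
          List.take_append_drop _ _
        rw [List.drop_drop] at this
        rw [show f + (j - f) = j by omega] at this
        rw [this, hA, List.take_append_drop]
      have h1 : bp' π ≤ bp' A + bp' B + bp' C + 2 := by
        calc bp' π = bp' (A ++ (B ++ C)) := by rw [← hsplit]
        _ ≤ bp' A + bp' (B ++ C) + 1 := bp'_append_le _ _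
        _ ≤ bp' A + (bp' B + bp' C + 1) + 1 := by
            have := bp'_append_le B C; omega
        _ = bp' A + bp' B + bp' C + 2 := by omega
      have h2 : bp' A + bp' B + bp' C ≤ bp' (FMOp.apply π (.rev j)) := by
        show bp' A + bp' B + bp' C ≤ bp' (fmPrefixReversal π j)
        unfold fmPrefixReversal
        rw [← hf, ← hA, ← hB, ← hC, ← bp'_reverse B]
        calc bp' A + bp' B.reverse + bp' C
            ≤ bp' (A ++ B.reverse) + bp' C := by have := bp'_append_ge A B.reverse; omega
          _ ≤ bp' (A ++ B.reverse ++ C) := bp'_append_ge _ _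
      omega
  | trans j k =>
      obtain ⟨hj1, hj2, hjk, hk⟩ := hv
      set f := fm π with hf
      set A := π.take f with hA
      set B := (π.drop f).take (j - f) with hB
      set C := (π.drop j).take (k - j) with hC
      set D := π.drop k with hD
      have hBC : B ++ (C ++ D) = π.drop f := by
        have h2 : (π.drop j).take (k - j) ++ (π.drop j).drop (k - j) = π.drop j :=
          List.take_append_drop _ _
        rw [List.drop_drop, show j + (k - j) = k by omega] at h2
        have h1 : (π.drop f).take (j - f) ++ (π.drop f).drop (j - f) = π.drop f :=
          List.take_append_drop _ _
        rw [List.drop_drop, show f + (j - f) = j by omega] at h1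
        rw [hB, hC, hD, h2, h1]
      have hsplit : π = A ++ (B ++ (C ++ D)) := by
        rw [hBC, hA, List.take_append_drop]
      have h1 : bp' π ≤ bp' A + bp' B + bp' C + bp' D + 3 := by
        calc bp' π = bp' (A ++ (B ++ (C ++ D))) := by rw [← hsplit]
        _ ≤ bp' A + bp' (B ++ (C ++ D)) + 1 := bp'_append_le _ _
        _ ≤ bp' A + (bp' B + bp' (C ++ D) + 1) + 1 := by
            have := bp'_append_le B (C ++ D); omega
        _ ≤ bp' A + (bp' B + (bp' C + bp' D + 1) + 1) + 1 := by
            have := bp'_append_le C D; omega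
        _ = bp' A + bp' B + bp' C + bp' D + 3 := by omega
      have h2 : bp' A + bp' B + bp' C + bp' D ≤ bp' (FMOp.apply π (.trans j k)) := by
        show _ ≤ bp' (fmPrefixTransposition π j k)
        unfold fmPrefixTransposition
        rw [← hf, ← hA, ← hB, ← hC, ← hD]
        calc bp' A + bp' B + bp' C + bp' D
            ≤ bp' (A ++ C) + bp' B + bp' D := by have := bp'_append_ge A C; omega
          _ ≤ bp' (A ++ C ++ B) + bp' D := by have := bp'_append_ge (A ++ C) B; omega
          _ ≤ bp' (A ++ C ++ B ++ D) := bp'_append_ge _ _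
      omega

lemma lb_seq (n : ℕ) : ∀ (ops : List FMOp) (π : List ℕ), FMValidSeq n π ops →
    bp' π ≤ bp' (applyFMSeq π ops) + 3 * ops.length := by
  intro ops
  induction ops with
  | nil => intro π _; simp [applyFMSeq]
  | cons o os ih =>
      intro π hv
      obtain ⟨hvo, hvos⟩ := hv
      have h1 := bp'_op_le n π o hvo
      have h2 := ih (o.apply π) hvos
      simp only [applyFMSeq, List.length_cons]
      omega

end LowerBound


section UpperBound

lemma headD_append (B C : List ℕ) (h : B ≠ []) : (B ++ C).headD 0 = B.headD 0 := by
  cases B with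
  | nil => simp at h
  | cons b B' => simp

lemma getLastD_append (B C : List ℕ) (h : C ≠ []) : (B ++ C).getLastD 0 = C.getLastD 0 := by
  rw [List.getLastD_eq_getLast?, List.getLastD_eq_getLast?, List.getLast?_append]
  cases h2 : C.getLast? with
  | none => exact absurd (List.getLast?_eq_none_iff.mp h2) h
  | some c => simp

lemma reverse_headD (B : List ℕ) : B.reverse.headD 0 = B.getLastD 0 := by
  rw [List.headD_eq_head?, List.head?_reverse, List.getLastD_eq_getLast?]

lemma reverse_getLastD (B : List ℕ) : B.reverse.getLastD 0 = B.headD 0 := by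
  rw [List.getLastD_eq_getLast?, List.getLast?_reverse, List.headD_eq_head?]

lemma calc_rev (A B C : List ℕ) (f v s : ℕ)
    (hAne : A ≠ []) (hBne : B ≠ []) (hCne : C ≠ [])
    (lastA : A.getLastD 0 = f - 1) (headB : B.headD 0 = v) (lastB : B.getLastD 0 = f)
    (headC : C.headD 0 = s)
    (h1 : bpc (f - 1) f = 0) (h2 : bpc (f - 1) v = 1) (h3 : bpc f s = 1) :
    bp' (A ++ B.reverse ++ C) < bp' (A ++ (B ++ C)) := by
  have hBrne : B.reverse ≠ [] := by simpa using hBne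
  have e_old : bp' (A ++ (B ++ C)) = bp' A + bp' B + bp' C + (bpc (f - 1) v + bpc f s) := by
    rw [bp'_append A (B ++ C) hAne (by simp [hBne]), bp'_append B C hBne hCne,
      headD_append B C hBne, lastA, headB, lastB, headC]
    omega
  have e_new : bp' (A ++ B.reverse ++ C) =
      bp' A + bp' B + bp' C + (bpc (f - 1) f + bpc v s) := by
    rw [bp'_append (A ++ B.reverse) C (by simp [hAne]) hCne,
      bp'_append A B.reverse hAne hBrne, bp'_reverse,
      getLastD_append A B.reverse hBrne, reverse_headD, reverse_getLastD,
      lastA, lastB, headB, headC]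
    omega
  have h4 : bpc v s ≤ 1 := bpc_le_one v s
  omega

lemma calc_trans (A B C D : List ℕ) (f t u v s : ℕ)
    (hAne : A ≠ []) (hBne : B ≠ []) (hCne : C ≠ []) (hDne : D ≠ [])
    (lastA : A.getLastD 0 = f - 1) (headB : B.headD 0 = v) (lastB : B.getLastD 0 = u)
    (headC : C.headD 0 = f) (lastC : C.getLastD 0 = f + t) (headD : D.headD 0 = s)
    (h1 : bpc (f - 1) f = 0) (h2 : bpc (f - 1) v = 1) (h3 : bpc u f = 1)
    (h4 : bpc (f + t) s = 1) :
    bp' (A ++ C ++ B ++ D) < bp' (A ++ (B ++ (C ++ D))) := by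
  have e_old : bp' (A ++ (B ++ (C ++ D))) = bp' A + bp' B + bp' C + bp' D +
      (bpc (f - 1) v + bpc u f + bpc (f + t) s) := by
    rw [bp'_append A (B ++ (C ++ D)) hAne (by simp [hBne]),
      bp'_append B (C ++ D) hBne (by simp [hCne]),
      bp'_append C D hCne hDne,
      headD_append B (C ++ D) hBne, headD_append C D hCne,
      lastA, headB, lastB, headC, lastC, headD]
    omega
  have e_new : bp' (A ++ C ++ B ++ D) = bp' A + bp' B + bp' C + bp' D +
      (bpc (f - 1) f + bpc (f + t) v + bpc u s) := by
    rw [bp'_append (A ++ C ++ B) D (by simp [hAne]) hDne,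
      bp'_append (A ++ C) B (by simp [hAne]) hBne,
      bp'_append A C hAne hCne,
      getLastD_append (A ++ C) B hBne,
      getLastD_append A C hCne,
      lastA, headC, lastC, headB, lastB, headD]
    omega
  have h5 : bpc (f + t) v ≤ 1 := bpc_le_one _ _
  have h6 : bpc u s ≤ 1 := bpc_le_one _ _
  omega

lemma case_rev (n : ℕ) (π : List ℕ) (f p : ℕ)
    (hperm : π.Perm (List.range (n + 2))) (h0 : π.getD 0 0 = 0)
    (hlast : π.getD (n + 1) 0 = n + 1) (hlen : π.length = n + 2)
    (hf : f = fm π) (hf1 : 1 ≤ f) (hfn : f ≤ n)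
    (hpre : ∀ i, i < f → π.getD i 0 = i)
    (hfne : π.getD f 0 ≠ f)
    (hvpos : ∀ i, f ≤ i → i < π.length → ¬ (π.getD i 0 < f))
    (hpv : π.getD p 0 = f) (hpf : f < p) (hpn : p ≤ n)
    (hcase : π.getD (p + 1) 0 ≠ f + 1) :
    ∃ o : FMOp, o.Valid n π ∧ IsPerm n (o.apply π) ∧ bp' (o.apply π) < bp' π := by
  refine ⟨FMOp.rev (p + 1), ⟨by omega, by omega⟩, ?_⟩
  have hnew : FMOp.apply π (FMOp.rev (p + 1)) =
      π.take f ++ ((π.drop f).take (p + 1 - f)).reverse ++ π.drop (p + 1) := by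
    show fmPrefixReversal π (p + 1) = _
    unfold fmPrefixReversal
    rw [← hf]
  have hsplit : π = π.take f ++ ((π.drop f).take (p + 1 - f) ++ π.drop (p + 1)) := by
    have h1 : (π.drop f).take (p + 1 - f) ++ (π.drop f).drop (p + 1 - f) = π.drop f :=
      List.take_append_drop _ _
    rw [List.drop_drop, show f + (p + 1 - f) = p + 1 by omega] at h1
    rw [h1, List.take_append_drop]
  have hA_len : (π.take f).length = f := by rw [List.length_take]; omega
  have hB_len : ((π.drop f).take (p + 1 - f)).length = p + 1 - f := by
    rw [List.length_take, List.length_drop]; omega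
  have hC_len : (π.drop (p + 1)).length = π.length - (p + 1) := List.length_drop
  have hAne : π.take f ≠ [] := by
    intro h; rw [h] at hA_len; simp at hA_len; omega
  have hBne : (π.drop f).take (p + 1 - f) ≠ [] := by
    intro h; rw [h] at hB_len; simp at hB_len; omega
  have hCne : π.drop (p + 1) ≠ [] := by
    intro h; rw [h] at hC_len; simp at hC_len; omega
  have lastA : (π.take f).getLastD 0 = f - 1 := by
    rw [getLastD_eq_getD _ hAne, hA_len, getD_take π (show f - 1 < f by omega)]
    exact hpre (f - 1) (by omega)
  have headB : ((π.drop f).take (p + 1 - f)).headD 0 = π.getD f 0 := by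
    rw [headD_eq_getD, getD_take _ (show 0 < p + 1 - f by omega), getD_drop, Nat.add_zero]
  have lastB : ((π.drop f).take (p + 1 - f)).getLastD 0 = f := by
    rw [getLastD_eq_getD _ hBne, hB_len,
      getD_take _ (show p + 1 - f - 1 < p + 1 - f by omega), getD_drop,
      show f + (p + 1 - f - 1) = p by omega]
    exact hpv
  have headC : (π.drop (p + 1)).headD 0 = π.getD (p + 1) 0 := by
    rw [headD_eq_getD, getD_drop, Nat.add_zero]
  constructor
  · rw [hnew]
    refine ⟨?_, ?_, ?_⟩
    · have h1 : (π.take f ++ ((π.drop f).take (p + 1 - f)).reverse ++ π.drop (p + 1)).Perm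
          (π.take f ++ (π.drop f).take (p + 1 - f) ++ π.drop (p + 1)) :=
        (((π.drop f).take (p + 1 - f)).reverse_perm.append_left _).append_right _
      have h2 : π.take f ++ (π.drop f).take (p + 1 - f) ++ π.drop (p + 1) = π := by
        rw [List.append_assoc, ← hsplit]
      rw [h2] at h1
      exact h1.trans hperm
    · rw [List.getD_append _ _ _ _
          (by rw [List.length_append, hA_len]; omega),
        List.getD_append _ _ _ _ (by rw [hA_len]; omega),
        getD_take π (show 0 < f by omega)]
      exact h0
    · have hl2 : (π.take f ++ ((π.drop f).take (p + 1 - f)).reverse).length = p + 1 := by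
        rw [List.length_append, List.length_reverse, hA_len, hB_len]; omega
      rw [List.getD_append_right _ _ _ _ (by rw [hl2]; omega), hl2, getD_drop,
        show p + 1 + (n + 1 - (p + 1)) = n + 1 by omega]
      exact hlast
  · rw [hnew]
    conv_rhs => rw [hsplit]
    apply calc_rev _ _ _ f (π.getD f 0) (π.getD (p + 1) 0) hAne hBne hCne lastA headB lastB
      headC
    · have := bpc_eq_zero (f - 1)
      rwa [show f - 1 + 1 = f by omega] at this
    · apply bpc_eq_one
      · rw [show f - 1 + 1 = f by omega]; exact fun h => hfne h.symm
      · intro h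
        exact hvpos f le_rfl (by omega) (by omega)
    · apply bpc_eq_one
      · exact fun h => hcase h.symm
      · intro h
        exact hvpos (p + 1) (by omega) (by omega) (by omega)

lemma case_trans (n : ℕ) (π : List ℕ) (f p t : ℕ)
    (hperm : π.Perm (List.range (n + 2))) (h0 : π.getD 0 0 = 0)
    (hlast : π.getD (n + 1) 0 = n + 1) (hlen : π.length = n + 2)
    (hinj : ∀ i j, i < π.length → j < π.length → π.getD i 0 = π.getD j 0 → i = j)
    (hf : f = fm π) (hf1 : 1 ≤ f) (hfn : f ≤ n)
    (hpre : ∀ i, i < f → π.getD i 0 = i)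
    (hfne : π.getD f 0 ≠ f)
    (hvpos : ∀ i, f ≤ i → i < π.length → ¬ (π.getD i 0 < f))
    (hpv : π.getD p 0 = f) (hpf : f < p) (hpn : p ≤ n)
    (hcase : π.getD (p + 1) 0 = f + 1)
    (hq1 : π.getD (p + t + 1) 0 ≠ f + t + 1)
    (hrun : ∀ i, i ≤ t → π.getD (p + i) 0 = f + i)
    (hqn : p + t ≤ n) :
    ∃ o : FMOp, o.Valid n π ∧ IsPerm n (o.apply π) ∧ bp' (o.apply π) < bp' π := by
  refine ⟨FMOp.trans p (p + t + 1), ⟨by omega, by omega, by omega, by omega⟩, ?_⟩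
  have hnew : FMOp.apply π (FMOp.trans p (p + t + 1)) =
      π.take f ++ (π.drop p).take (p + t + 1 - p) ++ (π.drop f).take (p - f) ++
        π.drop (p + t + 1) := by
    show fmPrefixTransposition π p (p + t + 1) = _
    unfold fmPrefixTransposition
    rw [← hf]
  have hsplit : π = π.take f ++ ((π.drop f).take (p - f) ++
      ((π.drop p).take (p + t + 1 - p) ++ π.drop (p + t + 1))) := by
    have h2 : (π.drop p).take (p + t + 1 - p) ++ (π.drop p).drop (p + t + 1 - p) =
        π.drop p := List.take_append_drop _ _
    rw [List.drop_drop, show p + (p + t + 1 - p) = p + t + 1 by omega] at h2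
    have h1 : (π.drop f).take (p - f) ++ (π.drop f).drop (p - f) = π.drop f :=
      List.take_append_drop _ _
    rw [List.drop_drop, show f + (p - f) = p by omega] at h1
    rw [h2, h1, List.take_append_drop]
  have hA_len : (π.take f).length = f := by rw [List.length_take]; omega
  have hB_len : ((π.drop f).take (p - f)).length = p - f := by
    rw [List.length_take, List.length_drop]; omega
  have hC_len : ((π.drop p).take (p + t + 1 - p)).length = p + t + 1 - p := by
    rw [List.length_take, List.length_drop]; omega
  have hD_len : (π.drop (p + t + 1)).length = π.length - (p + t + 1) :=
    List.length_drop
  have hAne : π.take f ≠ [] := by intro h; rw [h] at hA_len; simp at hA_len; omega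
  have hBne : (π.drop f).take (p - f) ≠ [] := by
    intro h; rw [h] at hB_len; simp at hB_len; omega
  have hCne : (π.drop p).take (p + t + 1 - p) ≠ [] := by
    intro h; rw [h] at hC_len; simp at hC_len; omega
  have hDne : π.drop (p + t + 1) ≠ [] := by
    intro h; rw [h] at hD_len; simp at hD_len; omega
  have lastA : (π.take f).getLastD 0 = f - 1 := by
    rw [getLastD_eq_getD _ hAne, hA_len, getD_take π (show f - 1 < f by omega)]
    exact hpre (f - 1) (by omega)
  have headB : ((π.drop f).take (p - f)).headD 0 = π.getD f 0 := by
    rw [headD_eq_getD, getD_take _ (show 0 < p - f by omega), getD_drop, Nat.add_zero]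
  have lastB : ((π.drop f).take (p - f)).getLastD 0 = π.getD (p - 1) 0 := by
    rw [getLastD_eq_getD _ hBne, hB_len,
      getD_take _ (show p - f - 1 < p - f by omega), getD_drop,
      show f + (p - f - 1) = p - 1 by omega]
  have headC : ((π.drop p).take (p + t + 1 - p)).headD 0 = f := by
    rw [headD_eq_getD, getD_take _ (show 0 < p + t + 1 - p by omega), getD_drop,
      Nat.add_zero]
    exact hpv
  have lastC : ((π.drop p).take (p + t + 1 - p)).getLastD 0 = f + t := by
    rw [getLastD_eq_getD _ hCne, hC_len,
      getD_take _ (show p + t + 1 - p - 1 < p + t + 1 - p by omega), getD_drop,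
      show p + (p + t + 1 - p - 1) = p + t by omega]
    exact hrun t le_rfl
  have headD : (π.drop (p + t + 1)).headD 0 = π.getD (p + t + 1) 0 := by
    rw [headD_eq_getD, getD_drop, Nat.add_zero]
  constructor
  · rw [hnew]
    refine ⟨?_, ?_, ?_⟩
    · have h1 : (π.take f ++ (π.drop p).take (p + t + 1 - p) ++ (π.drop f).take (p - f) ++
          π.drop (p + t + 1)).Perm
          (π.take f ++ ((π.drop f).take (p - f) ++
            ((π.drop p).take (p + t + 1 - p) ++ π.drop (p + t + 1)))) := by
        rw [List.append_assoc, List.append_assoc]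
        apply List.Perm.append_left
        rw [← List.append_assoc, ← List.append_assoc]
        exact List.perm_append_comm.append_right _
      rw [← hsplit] at h1
      exact h1.trans hperm
    · rw [List.getD_append _ _ _ _
          (by rw [List.length_append, List.length_append, hA_len]; omega),
        List.getD_append _ _ _ _ (by rw [List.length_append, hA_len]; omega),
        List.getD_append _ _ _ _ (by rw [hA_len]; omega),
        getD_take π (show 0 < f by omega)]
      exact h0
    · have hl2 : (π.take f ++ (π.drop p).take (p + t + 1 - p) ++
          (π.drop f).take (p - f)).length = p + t + 1 := by
        rw [List.length_append, List.length_append, hA_len, hB_len, hC_len]; omega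
      rw [List.getD_append_right _ _ _ _ (by rw [hl2]; omega), hl2, getD_drop,
        show p + t + 1 + (n + 1 - (p + t + 1)) = n + 1 by omega]
      exact hlast
  · rw [hnew]
    conv_rhs => rw [hsplit]
    apply calc_trans _ _ _ _ f t (π.getD (p - 1) 0) (π.getD f 0) (π.getD (p + t + 1) 0)
      hAne hBne hCne hDne lastA headB lastB headC lastC headD
    · have := bpc_eq_zero (f - 1)
      rwa [show f - 1 + 1 = f by omega] at this
    · apply bpc_eq_one
      · rw [show f - 1 + 1 = f by omega]; exact fun h => hfne h.symm
      · intro h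
        exact hvpos f le_rfl (by omega) (by omega)
    · apply bpc_eq_one
      · intro h
        exact hvpos (p - 1) (by omega) (by omega) (by omega)
      · intro h
        have h2 : π.getD (p + 1) 0 = π.getD (p - 1) 0 := by rw [hcase]; omega
        have := hinj (p + 1) (p - 1) (by omega) (by omega) h2
        omega
    · apply bpc_eq_one
      · exact fun h => hq1 h.symm
      · intro h
        rcases Nat.eq_zero_or_pos t with h0t | h0t
        · exact hvpos (p + t + 1) (by omega) (by omega) (by omega)
        · have h3 := hrun (t - 1) (by omega)
          have h4 : π.getD (p + t + 1) 0 = π.getD (p + (t - 1)) 0 := by rw [h3]; omega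
          have := hinj (p + t + 1) (p + (t - 1)) (by omega) (by omega) h4
          omega

lemma key_step (n : ℕ) (π : List ℕ) (hπ : IsPerm n π) (hne : π ≠ List.range (n + 2)) :
    ∃ o : FMOp, o.Valid n π ∧ IsPerm n (o.apply π) ∧ bp' (o.apply π) < bp' π := by
  obtain ⟨hperm, h0, hlast⟩ := hπ
  have hlen : π.length = n + 2 := by simpa using hperm.length_eq
  have hnd : π.Nodup := hperm.nodup_iff.mpr List.nodup_range
  have hinj : ∀ i j, i < π.length → j < π.length → π.getD i 0 = π.getD j 0 → i = j := by
    intro i j hi hj h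
    rw [List.getD_eq_getElem _ _ hi, List.getD_eq_getElem _ _ hj] at h
    exact (hnd.getElem_inj_iff).mp h
  have hid : ¬ (∀ i, i < n + 2 → π.getD i 0 = i) := by
    intro hall
    apply hne
    apply List.ext_getElem (by rw [hlen, List.length_range])
    intro i h1 h2
    rw [List.getElem_range, ← List.getD_eq_getElem π 0 h1]
    exact hall i (by omega)
  have hf : fm π = fm π := rfl
  generalize hfm : fm π = f at *
  have hfle : f ≤ π.length := by rw [← hfm]; exact fm_le π
  have hpre : ∀ i, i < f → π.getD i 0 = i := by
    intro i hi; rw [← hfm] at hi; exact fm_getD π i hi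
  have hfn : f ≤ n := by
    by_contra h
    apply hid
    intro i hi
    rcases Nat.lt_or_ge i (n + 1) with h1 | h1
    · exact hpre i (by omega)
    · have : i = n + 1 := by omega
      rw [this]; exact hlast
  have hflt : f < π.length := by omega
  have hfne : π.getD f 0 ≠ f := by
    rw [← hfm] at hflt ⊢; exact fm_lt_ne π hflt
  have hf1 : 1 ≤ f := by
    by_contra h
    have : f = 0 := by omega
    rw [this] at hfne
    exact hfne h0
  have hvpos : ∀ i, f ≤ i → i < π.length → ¬ (π.getD i 0 < f) := by
    intro i hfi hil hv
    have h1 : π.getD (π.getD i 0) 0 = π.getD i 0 := hpre _ hv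
    have h2 : π.getD i 0 < π.length := by omega
    have := hinj (π.getD i 0) i h2 hil h1
    omega
  have hmem : f ∈ π := hperm.mem_iff.mpr (List.mem_range.mpr (by omega))
  obtain ⟨p, hplt, hpget⟩ := List.mem_iff_getElem.mp hmem
  have hpv : π.getD p 0 = f := by rw [List.getD_eq_getElem _ _ hplt]; exact hpget
  have hpf : f < p := by
    rcases lt_trichotomy p f with h | h | h
    · have := hpre p h; omega
    · rw [h] at hpv; exact absurd hpv hfne
    · exact h
  have hpn : p ≤ n := by
    by_contra h
    have : p = n + 1 := by omega
    rw [this, hlast] at hpv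
    omega
  by_cases hcase : π.getD (p + 1) 0 = f + 1
  · have hex : ∃ t, π.getD (p + t + 1) 0 ≠ f + t + 1 := by
      refine ⟨n - p, ?_⟩
      rw [show p + (n - p) + 1 = n + 1 by omega, hlast]
      omega
    have hq1 : π.getD (p + Nat.find hex + 1) 0 ≠ f + Nat.find hex + 1 := Nat.find_spec hex
    have hrun : ∀ i, i ≤ Nat.find hex → π.getD (p + i) 0 = f + i := by
      intro i
      induction i with
      | zero => intro _; simpa using hpv
      | succ i ih =>
          intro hle
          have h1 : ¬ (π.getD (p + i + 1) 0 ≠ f + i + 1) := by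
            have := Nat.find_min hex (show i < Nat.find hex by omega)
            simpa using this
          push_neg at h1
          rw [show p + (i + 1) = p + i + 1 by omega, show f + (i + 1) = f + i + 1 by omega]
          exact h1
    have htn : Nat.find hex ≤ n - p := by
      apply Nat.find_le
      rw [show p + (n - p) + 1 = n + 1 by omega, hlast]
      omega
    exact case_trans n π f p (Nat.find hex) hperm h0 hlast hlen hinj hfm.symm hf1 hfn hpre
      hfne hvpos hpv hpf hpn hcase hq1 hrun (by omega)
  · exact case_rev n π f p hperm h0 hlast hlen hfm.symm hf1 hfn hpre hfne hvpos hpv hpf hpn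
      hcase

end UpperBound



lemma exists_sort (n : ℕ) : ∀ (b : ℕ) (π : List ℕ), bp' π ≤ b → IsPerm n π →
    ∃ ops : List FMOp, FMValidSeq n π ops ∧ applyFMSeq π ops = List.range (n + 2) ∧
      ops.length ≤ bp' π := by
  intro b
  induction b with
  | zero =>
      intro π hb hπ
      by_cases hne : π = List.range (n + 2)
      · exact ⟨[], trivial, hne, by simp⟩
      · obtain ⟨o, _, _, hlt⟩ := key_step n π hπ hne
        omega
  | succ b ih =>
      intro π hb hπ
      by_cases hne : π = List.range (n + 2)
      · exact ⟨[], trivial, hne, by simp⟩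
      · obtain ⟨o, hov, hop, hlt⟩ := key_step n π hπ hne
        obtain ⟨ops, h1, h2, h3⟩ := ih (o.apply π) (by omega) hop
        refine ⟨o :: ops, ⟨hov, h1⟩, h2, ?_⟩
        simp only [List.length_cons]
        omega

/-- `⌈b′(π)/3⌉ ≤ d′(π) ≤ b′(π)` for the forward-march sorting
distance. -/
theorem sortFM_bounds
    (n : ℕ) (π : List ℕ) (hπ : IsPerm n π) :
    (∀ ops : List FMOp, FMValidSeq n π ops →
        applyFMSeq π ops = List.range (n + 2) → (bp' π + 2) / 3 ≤ ops.length) ∧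
    (∃ ops : List FMOp, FMValidSeq n π ops ∧
        applyFMSeq π ops = List.range (n + 2) ∧ ops.length ≤ bp' π) := by
  constructor
  · intro ops hval happ
    have := lb_seq n ops π hval
    rw [happ, bp'_range] at this
    omega
  · exact exists_sort n (bp' π) π le_rfl hπ
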